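/- Let H be an N×N Hermitian complex matrix with an orthonormal basis of eigenvectors ψ_1,…,ψ_N of ℂ^N satisfying Hψ_j = λ_j ψ_j (λ_j ∈ ℝ). Let x ∈ ℂ^N and a ∈ ℝ. For i ∈ {1,…,N}, define g(i) = (Hx)_i · e_i and x'(i) = x − a·g(i). Then (1/N) · Σ_{i=1}^N ‖x'(i)‖² = Σ_{j=1}^N (1 − 2aλ_j/N) · |⟨ψ_j, x⟩|² + (a²/N) · ‖Hx‖². -/

import Mathlib

open scoped InnerProductSpace

/-- `A.mulVec` viewed as acting on `EuclideanSpace`. -/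
noncomputable def mulVecE {N : ℕ} (A : Matrix (Fin N) (Fin N) ℂ)
    (v : EuclideanSpace ℂ (Fin N)) : EuclideanSpace ℂ (Fin N) :=
  WithLp.toLp 2 (A.mulVec v)

/-- For a Hermitian `H` with orthonormal eigenbasis `ψ_1,…,ψ_N`
(`H ψ_j = λ_j ψ_j`), the expectation over a uniformly sampled coordinate `i` of
`‖x − a (Hx)_i e_i‖²` equals `Σ_j (1 − 2aλ_j/N)·|⟨ψ_j, x⟩|² + (a²/N)·‖Hx‖²`. -/
theorem stmt_8 (N : ℕ) (hN : 1 ≤ N)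
    (H : Matrix (Fin N) (Fin N) ℂ) (hH : H.IsHermitian)
    (ψ : Fin N → EuclideanSpace ℂ (Fin N)) (lam : Fin N → ℝ)
    (hON : Orthonormal ℂ ψ)
    (hspan : Submodule.span ℂ (Set.range ψ) = ⊤)
    (heig : ∀ j : Fin N, mulVecE H (ψ j) = (lam j : ℂ) • ψ j)
    (x : EuclideanSpace ℂ (Fin N)) (a : ℝ) :
    (1 / (N : ℝ)) * ∑ i : Fin N,
        ‖x - (a : ℂ) • (mulVecE H x i • (EuclideanSpace.single i (1 : ℂ)))‖ ^ 2
      = (∑ j : Fin N, (1 - 2 * a * lam j / (N : ℝ)) * ‖⟪ψ j, x⟫_ℂ‖ ^ 2)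
        + (a ^ 2 / (N : ℝ)) * ‖mulVecE H x‖ ^ 2 := by
  have hN0 : (N : ℝ) ≠ 0 := by
    have : (0:ℝ) < N := by exact_mod_cast hN
    linarith
  set b : OrthonormalBasis (Fin N) ℂ (EuclideanSpace ℂ (Fin N)) :=
    OrthonormalBasis.mk hON (le_of_eq hspan.symm) with hbdef
  have hb : ⇑b = ψ := by rw [hbdef]; exact OrthonormalBasis.coe_mk _ _
  have hsym := Matrix.isHermitian_iff_isSymmetric.mp hH
  have hadj : ∀ u v : EuclideanSpace ℂ (Fin N),
      ⟪mulVecE H u, v⟫_ℂ = ⟪u, mulVecE H v⟫_ℂ := by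
    intro u v
    have h1 : mulVecE H u = Matrix.toEuclideanLin H u := rfl
    have h2 : mulVecE H v = Matrix.toEuclideanLin H v := rfl
    rw [h1, h2]; exact hsym u v
  have key : ∀ j, ⟪ψ j, mulVecE H x⟫_ℂ = (lam j : ℂ) * ⟪ψ j, x⟫_ℂ := by
    intro j
    rw [← hadj, heig j, inner_smul_left]
    simp [Complex.conj_ofReal]
  have hxHx : ⟪x, mulVecE H x⟫_ℂ = ∑ j, ((lam j * ‖⟪ψ j, x⟫_ℂ‖ ^ 2 : ℝ) : ℂ) := by
    rw [← b.sum_inner_mul_inner x (mulVecE H x)]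
    refine Finset.sum_congr rfl fun j _ => ?_
    rw [hb, key j]
    have h1 : ⟪x, ψ j⟫_ℂ = (starRingEnd ℂ) ⟪ψ j, x⟫_ℂ := (inner_conj_symm _ _).symm
    rw [h1]
    calc (starRingEnd ℂ) ⟪ψ j, x⟫_ℂ * ((lam j : ℂ) * ⟪ψ j, x⟫_ℂ)
        = (lam j : ℂ) * (⟪ψ j, x⟫_ℂ * (starRingEnd ℂ) ⟪ψ j, x⟫_ℂ) := by ring
      _ = _ := by rw [Complex.mul_conj, Complex.normSq_eq_norm_sq]; push_cast; ring
  have hS : RCLike.re ⟪x, mulVecE H x⟫_ℂ = ∑ j, lam j * ‖⟪ψ j, x⟫_ℂ‖ ^ 2 := by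
    rw [hxHx, ← Complex.ofReal_sum]
    simp only [RCLike.re_to_complex, Complex.ofReal_re]
  have hPar : ∑ j, ‖⟪ψ j, x⟫_ℂ‖ ^ 2 = ‖x‖ ^ 2 := by
    have h := b.sum_inner_mul_inner x x
    have h2 : ∀ j, ⟪x, b j⟫_ℂ * ⟪b j, x⟫_ℂ = ((‖⟪ψ j, x⟫_ℂ‖ ^ 2 : ℝ) : ℂ) := by
      intro j
      rw [hb]
      have h1 : ⟪x, ψ j⟫_ℂ = (starRingEnd ℂ) ⟪ψ j, x⟫_ℂ := (inner_conj_symm _ _).symm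
      rw [h1, mul_comm, Complex.mul_conj, Complex.normSq_eq_norm_sq]
    rw [Finset.sum_congr rfl fun j _ => h2 j, ← Complex.ofReal_sum,
      inner_self_eq_norm_sq_to_K] at h
    have h' : ((∑ j, ‖⟪ψ j, x⟫_ℂ‖ ^ 2 : ℝ) : ℂ) = ((‖x‖ ^ 2 : ℝ) : ℂ) := by
      rw [h]; norm_cast
    exact Complex.ofReal_injective h'
  have hnorm : ∀ v : EuclideanSpace ℂ (Fin N), ‖v‖ ^ 2 = ∑ i, ‖v i‖ ^ 2 := by
    intro v
    rw [EuclideanSpace.norm_eq, Real.sq_sqrt (by positivity)]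
  have hterm : ∀ i : Fin N,
      ‖x - (a : ℂ) • (mulVecE H x i • (EuclideanSpace.single i (1 : ℂ)))‖ ^ 2
        = ‖x‖ ^ 2 - 2 * RCLike.re ((a : ℂ) * (mulVecE H x i * (starRingEnd ℂ) (x i)))
          + a ^ 2 * ‖mulVecE H x i‖ ^ 2 := by
    intro i
    rw [@norm_sub_sq ℂ, inner_smul_right, inner_smul_right,
      EuclideanSpace.inner_single_right, norm_smul, norm_smul,
      EuclideanSpace.norm_single, norm_one, Complex.norm_real, Real.norm_eq_abs]
    have h1 : (a : ℂ) * (mulVecE H x i * ((1:ℂ) * (starRingEnd ℂ) (x i)))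
        = (a : ℂ) * (mulVecE H x i * (starRingEnd ℂ) (x i)) := by ring
    rw [h1, mul_one, mul_pow, sq_abs]
  have hsum2 : ∑ i, RCLike.re ((a : ℂ) * (mulVecE H x i * (starRingEnd ℂ) (x i)))
      = a * RCLike.re ⟪x, mulVecE H x⟫_ℂ := by
    rw [← map_sum, ← Finset.mul_sum]
    have h3 : ∑ i, mulVecE H x i * (starRingEnd ℂ) (x i) = ⟪x, mulVecE H x⟫_ℂ := by
      rw [PiLp.inner_apply]
      exact Finset.sum_congr rfl fun i _ => by
        rw [RCLike.inner_apply, mul_comm]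
    rw [h3]
    simp only [RCLike.re_to_complex, Complex.re_ofReal_mul]
  rw [Finset.sum_congr rfl fun i _ => hterm i]
  rw [Finset.sum_add_distrib, Finset.sum_sub_distrib, Finset.sum_const, Finset.card_univ,
    Fintype.card_fin, ← Finset.mul_sum, hsum2, hS, ← Finset.mul_sum, ← hnorm]
  have hrhs : ∀ j, (1 - 2 * a * lam j / (N : ℝ)) * ‖⟪ψ j, x⟫_ℂ‖ ^ 2
      = ‖⟪ψ j, x⟫_ℂ‖ ^ 2 - (2 * a / (N : ℝ)) * (lam j * ‖⟪ψ j, x⟫_ℂ‖ ^ 2) := by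
    intro j; field_simp
  rw [Finset.sum_congr rfl fun j _ => hrhs j, Finset.sum_sub_distrib, ← Finset.mul_sum, hPar]
  field_simp
  ring
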